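/- arXiv:1809.00516 — 3 statements merged into one kernel-verified Lean document; each statement's English description precedes it below -/
import Mathlib

section
/- Let φ_t = ωt + γW_t with W standard Brownian motion, γ > 0, c = iω − γ²/2 ≠ 0, and Z_t = ∫_0^t e^{iφ_s} ds. Then E[|Z_t|²] = c⁻²(e^{ct} − 1 − ct) + conj(c)⁻²(e^{conj(c)t} − 1 − conj(c)t) for all t ≥ 0. -/
open MeasureTheory ProbabilityTheory Complex
open scoped NNReal ENNReal Real

/-- A standard real Brownian motion started at `0`: measurable marginals, a.s. starting
at `0`, a.s. continuous paths, Gaussian increments of mean `0` and variance `t − s`,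
and independent increments. -/
structure IsStdBrownian {Ω : Type*} [MeasurableSpace Ω] (μ : Measure Ω)
    (W : ℝ → Ω → ℝ) : Prop where
  meas : ∀ t, Measurable (W t)
  start : ∀ᵐ x ∂μ, W 0 x = 0
  cont : ∀ᵐ x ∂μ, Continuous fun t => W t x
  incr_law : ∀ s t : ℝ, 0 ≤ s → s ≤ t →
    μ.map (fun x => W t x - W s x) = gaussianReal 0 (Real.toNNReal (t - s))
  indep_incr : ∀ (n : ℕ) (ts : Fin (n + 1) → ℝ), Monotone ts →
    iIndepFun
      (fun (i : Fin n) x => W (ts i.succ) x - W (ts i.castSucc) x) μ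


lemma gaussian_cexp (v : ℝ≥0) (a : ℝ) :
    ∫ y : ℝ, Complex.exp (Complex.I * a * y) ∂(gaussianReal 0 v)
      = Complex.exp (-(a ^ 2 * v) / 2) := by
  by_cases hv : v = 0
  · simp [hv, gaussianReal_zero_var]
  · rw [gaussianReal_of_var_ne_zero _ hv]
    have hpdf : (gaussianPDF 0 v) = fun x => ((Real.toNNReal (gaussianPDFReal 0 v x) : ℝ≥0) : ℝ≥0∞) := by
      ext x; rfl
    rw [hpdf, integral_withDensity_eq_integral_smul
      ((measurable_gaussianPDFReal 0 v).real_toNNReal)]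
    have hvpos : (0:ℝ) < (v:ℝ) := by
      rcases lt_or_eq_of_le (v.coe_nonneg) with h | h
      · exact h
      · exact absurd (NNReal.coe_eq_zero.mp h.symm) hv
    have hb : (0:ℝ) < (2 * (v:ℝ))⁻¹ := by positivity
    have hsq : (0:ℝ) < Real.sqrt (2 * π * v) := Real.sqrt_pos.mpr (by positivity)
    have key := fourierIntegral_gaussian (b := (((2 * (v:ℝ))⁻¹ : ℝ) : ℂ)) (by simpa using hb) (a : ℂ)
    have heq : ∀ y : ℝ, (Real.toNNReal (gaussianPDFReal 0 v y) : ℝ≥0) • Complex.exp (Complex.I * a * y)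
        = ((Real.sqrt (2 * π * v))⁻¹ : ℂ) *
          (Complex.exp (Complex.I * a * y) * Complex.exp (-(((2 * (v:ℝ))⁻¹ : ℝ):ℂ) * (y:ℂ) ^ 2)) := by
      intro y
      rw [NNReal.smul_def, Real.coe_toNNReal _ (gaussianPDFReal_nonneg 0 v y)]
      rw [gaussianPDFReal, Complex.real_smul]
      push_cast
      rw [mul_assoc, ← Complex.exp_add, ← Complex.exp_add]
      congr 1
      apply congrArg
      have hvne : ((v:ℝ):ℂ) ≠ 0 := by
        simp only [ne_eq, Complex.ofReal_eq_zero]; positivity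
      field_simp
      ring
    simp_rw [heq]
    rw [integral_const_mul, key]
    have h1 : ((π : ℂ) / (((2 * (v:ℝ))⁻¹ : ℝ):ℂ)) = (((2 * π * v : ℝ)):ℂ) := by
      push_cast
      field_simp
    rw [h1]
    have h2 : (((2 * π * v : ℝ)):ℂ) ^ (1/2 : ℂ) = ((Real.sqrt (2 * π * v) : ℝ) : ℂ) := by
      rw [show ((1/2 : ℂ)) = ((1/2 : ℝ) : ℂ) by push_cast; ring]
      rw [← Complex.ofReal_cpow (by positivity)]
      rw [Real.sqrt_eq_rpow]
    rw [h2]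
    have h3 : -((a:ℂ)) ^ 2 / (4 * (((2 * (v:ℝ))⁻¹ : ℝ):ℂ)) = -((a:ℝ) ^ 2 * (v:ℝ) : ℝ) / 2 := by
      have : (((2 * (v:ℝ))⁻¹ : ℝ):ℂ) ≠ 0 := by
        simp only [ne_eq, Complex.ofReal_eq_zero]; positivity
      push_cast
      field_simp
      ring
    rw [h3]
    rw [← mul_assoc]
    have h4 : ((Real.sqrt (2 * π * v))⁻¹ : ℂ) * ((Real.sqrt (2 * π * v) : ℝ) : ℂ) = 1 := by
      push_cast
      rw [inv_mul_cancel₀]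
      simpa using hsq.ne'
    rw [h4, one_mul]
    norm_cast

lemma int_cexp_affine (p q : ℂ) (hq : q ≠ 0) (a b : ℝ) :
    ∫ s in a..b, Complex.exp (p + q * s) =
      (Complex.exp (p + q * b) - Complex.exp (p + q * a)) / q := by
  simp_rw [Complex.exp_add]
  rw [intervalIntegral.integral_const_mul, integral_exp_mul_complex hq]
  ring

lemma det_integral (c : ℂ) (hc0 : c ≠ 0) (t : ℝ) (ht : 0 ≤ t) :
    ∫ p : ℝ × ℝ, (if p.1 ≤ p.2 then Complex.exp (c * (p.2 - p.1))
        else Complex.exp ((starRingEnd ℂ c) * (p.1 - p.2)))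
      ∂((volume.restrict (Set.Ioc 0 t)).prod (volume.restrict (Set.Ioc 0 t))) =
      (c ^ 2)⁻¹ * (Complex.exp (c * t) - 1 - c * t)
        + ((starRingEnd ℂ c) ^ 2)⁻¹ *
          (Complex.exp ((starRingEnd ℂ c) * t) - 1 - (starRingEnd ℂ c) * t) := by
  set d := starRingEnd ℂ c with hd
  have hd0 : d ≠ 0 := by simpa [hd] using hc0
  set K : ℝ × ℝ → ℂ := fun p => if p.1 ≤ p.2 then Complex.exp (c * (p.2 - p.1))
    else Complex.exp (d * (p.1 - p.2)) with hK
  have hKmeas : Measurable K := by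
    apply Measurable.ite (measurableSet_le measurable_fst measurable_snd)
    · exact (Complex.measurable_exp.comp (measurable_const.mul
        ((Complex.measurable_ofReal.comp measurable_snd).sub
          (Complex.measurable_ofReal.comp measurable_fst))))
    · exact (Complex.measurable_exp.comp (measurable_const.mul
        ((Complex.measurable_ofReal.comp measurable_fst).sub
          (Complex.measurable_ofReal.comp measurable_snd))))
  have hKint : Integrable K
      ((volume.restrict (Set.Ioc 0 t)).prod (volume.restrict (Set.Ioc 0 t))) := by
    have hfin : IsFiniteMeasure ((volume.restrict (Set.Ioc 0 t)).prod
        (volume.restrict (Set.Ioc 0 t))) := by infer_instance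
    refine Integrable.mono' (integrable_const (Real.exp (|c.re| * t))) hKmeas.aestronglyMeasurable ?_
    rw [Measure.prod_restrict] at *
    filter_upwards [ae_restrict_mem (measurableSet_Ioc.prod measurableSet_Ioc)] with p hp
    obtain ⟨⟨hp11, hp12⟩, hp21, hp22⟩ := hp
    simp only [hK]
    split_ifs with h
    · rw [Complex.norm_exp]
      apply Real.exp_le_exp.mpr
      have : (c * (↑p.2 - ↑p.1)).re = c.re * (p.2 - p.1) := by
        simp [Complex.mul_re]
      rw [this]
      calc c.re * (p.2 - p.1) ≤ |c.re * (p.2 - p.1)| := le_abs_self _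
        _ = |c.re| * |p.2 - p.1| := abs_mul _ _
        _ ≤ |c.re| * t := by
            apply mul_le_mul_of_nonneg_left _ (abs_nonneg _)
            rw [abs_sub_le_iff]; constructor <;> linarith
    · rw [Complex.norm_exp]
      apply Real.exp_le_exp.mpr
      have : (d * (↑p.1 - ↑p.2)).re = c.re * (p.1 - p.2) := by
        simp [hd, Complex.mul_re]
      rw [this]
      calc c.re * (p.1 - p.2) ≤ |c.re * (p.1 - p.2)| := le_abs_self _
        _ = |c.re| * |p.1 - p.2| := abs_mul _ _
        _ ≤ |c.re| * t := by
            apply mul_le_mul_of_nonneg_left _ (abs_nonneg _)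
            rw [abs_sub_le_iff]; constructor <;> linarith
  rw [MeasureTheory.integral_prod _ hKint]
  have inner : ∀ u ∈ Set.Ioc (0:ℝ) t,
      ∫ s in Set.Ioc (0:ℝ) t, K (u, s) =
        (Complex.exp (d * u) - 1) / d + (Complex.exp (-(c*u) + c*t) - 1) / c := by
    intro u hu
    obtain ⟨hu0, hut⟩ := hu
    have hsplit : Set.Ioc (0:ℝ) t = Set.Ioc 0 u ∪ Set.Ioc u t :=
      (Set.Ioc_union_Ioc_eq_Ioc hu0.le hut).symm
    have heq1 : Set.EqOn (fun s => K (u, s)) (fun s : ℝ => Complex.exp (d * u + (-d) * s))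
        (Set.Ioc 0 u) := by
      intro s hs
      simp only [hK]
      split_ifs with h
      · have : s = u := le_antisymm hs.2 h
        simp [this, ← Complex.exp_add]
      · congr 1; push_cast; ring
    have heq2 : Set.EqOn (fun s => K (u, s)) (fun s : ℝ => Complex.exp (-(c*u) + c * s))
        (Set.Ioc u t) := by
      intro s hs
      simp only [hK, if_pos hs.1.le]
      congr 1; push_cast; ring
    have hcont1 : Continuous (fun s : ℝ => Complex.exp (d * u + (-d) * s)) := by
      fun_prop
    have hcont2 : Continuous (fun s : ℝ => Complex.exp (-(c*u) + c * s)) := by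
      fun_prop
    rw [hsplit, setIntegral_union (Set.Ioc_disjoint_Ioc_of_le le_rfl) measurableSet_Ioc
      ((hcont1.integrableOn_Ioc).congr_fun heq1.symm measurableSet_Ioc)
      ((hcont2.integrableOn_Ioc).congr_fun heq2.symm measurableSet_Ioc)]
    rw [setIntegral_congr_fun measurableSet_Ioc heq1,
        setIntegral_congr_fun measurableSet_Ioc heq2]
    rw [← intervalIntegral.integral_of_le hu0.le, ← intervalIntegral.integral_of_le hut]
    rw [int_cexp_affine _ _ (neg_ne_zero.mpr hd0), int_cexp_affine _ _ hc0]
    rw [show d * (u:ℂ) + -d * (u:ℂ) = 0 by ring,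
        show d * (u:ℂ) + -d * ((0:ℝ):ℂ) = d * u by push_cast; ring,
        show -(c * (u:ℂ)) + c * (u:ℂ) = 0 by ring]
    rw [Complex.exp_zero, div_neg]
    ring
  rw [setIntegral_congr_fun measurableSet_Ioc inner]
  rw [← intervalIntegral.integral_of_le ht]
  have i1 : ∫ u in (0:ℝ)..t, (Complex.exp (d * u) - 1) / d
      = ((Complex.exp (d * t) - 1) / d - t) / d := by
    have : ∀ u : ℝ, (Complex.exp (d * u) - 1) / d = d⁻¹ * Complex.exp (d * u) - d⁻¹ := by
      intro u; field_simp
    simp_rw [this]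
    rw [intervalIntegral.integral_sub ((Continuous.intervalIntegrable (by fun_prop)) _ _)
      ((continuous_const.intervalIntegrable) _ _),
      intervalIntegral.integral_const_mul, integral_exp_mul_complex hd0]
    simp
    field_simp
  have i2 : ∫ u in (0:ℝ)..t, (Complex.exp (-(c*u) + c*t) - 1) / c
      = ((Complex.exp (c * t) - 1) / c - t) / c := by
    have h1 : ∀ u : ℝ, (Complex.exp (-(c*u) + c*t) - 1) / c
        = c⁻¹ * Complex.exp (c * ((t - u : ℝ) : ℂ)) - c⁻¹ := by
      intro u
      rw [show c * (((t - u : ℝ) : ℂ)) = -(c*(u:ℂ)) + c*t by push_cast; ring]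
      field_simp
    simp_rw [h1]
    rw [intervalIntegral.integral_sub ((Continuous.intervalIntegrable (by fun_prop)) _ _)
      ((continuous_const.intervalIntegrable) _ _),
      intervalIntegral.integral_const_mul]
    rw [intervalIntegral.integral_comp_sub_left (fun r : ℝ => Complex.exp (c * r)) t]
    rw [sub_self, sub_zero, integral_exp_mul_complex hc0]
    simp
    field_simp
  rw [intervalIntegral.integral_add ((Continuous.intervalIntegrable (by fun_prop)) _ _)
    ((Continuous.intervalIntegrable (by fun_prop)) _ _), i1, i2]
  field_simp
  ring


/-- `E[|Z_t|²] = c⁻²(e^{ct} − 1 − ct) + conj(c)⁻²(e^{conj(c)t} − 1 − conj(c)t)`,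
where `Z_t = ∫_0^t e^{i(ωs+γW_s)} ds` and `c = iω − γ²/2`. -/
theorem expectation_abs_sq_Z
    {Ω : Type*} [MeasurableSpace Ω] (μ : Measure Ω) [IsProbabilityMeasure μ]
    (W : ℝ → Ω → ℝ) (hW : IsStdBrownian μ W)
    (omg γ : ℝ) (hγ : 0 < γ) (c : ℂ) (hc : c = Complex.I * omg - (γ : ℂ) ^ 2 / 2)
    (hc0 : c ≠ 0) (t : ℝ) (ht : 0 ≤ t)
    (Z : ℝ → Ω → ℂ)
    (hZ : ∀ u x, Z u x = ∫ s in (0:ℝ)..u,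
        Complex.exp (Complex.I * ((omg : ℂ) * s + (γ : ℂ) * (W s x : ℂ)))) :
    ∫ x, (starRingEnd ℂ) (Z t x) * Z t x ∂μ =
      (c ^ 2)⁻¹ * (Complex.exp (c * t) - 1 - c * t)
        + ((starRingEnd ℂ c) ^ 2)⁻¹ *
          (Complex.exp ((starRingEnd ℂ c) * t) - 1 - (starRingEnd ℂ c) * t) := by
  classical
  obtain ⟨N, hNsub, hNmeas, hNnull⟩ :=
    exists_measurable_superset_of_null (ae_iff.mp hW.cont)
  set G := Nᶜ with hGdef
  have hG : MeasurableSet G := hNmeas.compl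
  have hGae : ∀ᵐ x ∂μ, x ∈ G := by
    rw [ae_iff]
    have : {x | ¬ x ∈ G} = N := by ext x; simp [hGdef]
    rw [this]; exact hNnull
  have hGcont : ∀ x ∈ G, Continuous fun s => W s x := by
    intro x hx
    by_contra h
    exact hx (hNsub h)
  set W' : ℝ → Ω → ℝ := fun s x => if x ∈ G then W s x else 0 with hW'def
  have hW'meas : ∀ s, Measurable (W' s) :=
    fun s => Measurable.ite hG (hW.meas s) measurable_const
  have hW'cont : ∀ x, Continuous fun s => W' s x := by
    intro x
    by_cases hx : x ∈ G
    · simpa [hW'def, hx] using hGcont x hx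
    · simp only [hW'def, hx, if_false]
      exact continuous_const
  have hjoint : Measurable (Function.uncurry W') :=
    measurable_uncurry_of_continuous_of_measurable hW'cont hW'meas
  have hW'W : ∀ᵐ x ∂μ, ∀ s, W' s x = W s x := by
    filter_upwards [hGae] with x hx s
    simp [hW'def, hx]
  set f : ℝ × Ω → ℂ :=
    fun p => Complex.exp (Complex.I * ((omg:ℂ) * p.1 + (γ:ℂ) * (W' p.1 p.2 : ℂ))) with hfdef
  have hfmeas : Measurable f := by
    apply Complex.measurable_exp.comp
    apply Measurable.mul measurable_const
    apply Measurable.add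
    · exact (Complex.measurable_ofReal.comp measurable_fst).const_mul _
    · exact Measurable.const_mul (Complex.measurable_ofReal.comp hjoint) _
  have hfnorm : ∀ p, ‖f p‖ = 1 := by
    intro p
    rw [hfdef]
    simp only [Complex.norm_exp]
    have : (Complex.I * ((omg:ℂ) * p.1 + (γ:ℂ) * (W' p.1 p.2 : ℂ))).re = 0 := by
      simp [Complex.mul_re, Complex.add_re, Complex.mul_im]
    rw [this, Real.exp_zero]
  set π0 : Measure ℝ := volume.restrict (Set.Ioc 0 t) with hπ0
  -- Step 1
  have step1 : ∫ x, (starRingEnd ℂ) (Z t x) * Z t x ∂μ =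
      ∫ x, (starRingEnd ℂ) (∫ s, f (s, x) ∂π0) * (∫ s, f (s, x) ∂π0) ∂μ := by
    apply integral_congr_ae
    filter_upwards [hW'W] with x hx
    have hZx : Z t x = ∫ s, f (s, x) ∂π0 := by
      rw [hZ, intervalIntegral.integral_of_le ht, hπ0]
      apply setIntegral_congr_fun measurableSet_Ioc
      intro s _
      simp [hfdef, hx s]
    rw [hZx]
  rw [step1]
  -- Step 2
  have step2 : ∀ x, (starRingEnd ℂ) (∫ s, f (s, x) ∂π0) * (∫ s, f (s, x) ∂π0)
      = ∫ p, (starRingEnd ℂ) (f (p.1, x)) * f (p.2, x) ∂(π0.prod π0) := by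
    intro x
    rw [← integral_conj, ← MeasureTheory.integral_prod_mul]
  simp_rw [step2]
  -- Step 3 : swap
  have hFmeas : Measurable (Function.uncurry
      fun (x : Ω) (p : ℝ × ℝ) => (starRingEnd ℂ) (f (p.1, x)) * f (p.2, x)) := by
    apply Measurable.mul
    · have hconj : Measurable fun z : ℂ => (starRingEnd ℂ) z :=
        Complex.continuous_conj.measurable
      exact hconj.comp (hfmeas.comp
        ((measurable_fst.comp measurable_snd).prodMk measurable_fst))
    · exact hfmeas.comp ((measurable_snd.comp measurable_snd).prodMk measurable_fst)
  have hfin : IsFiniteMeasure (π0.prod π0) := by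
    rw [hπ0]; infer_instance
  have hFint : Integrable (Function.uncurry
      fun (x : Ω) (p : ℝ × ℝ) => (starRingEnd ℂ) (f (p.1, x)) * f (p.2, x))
      (μ.prod (π0.prod π0)) := by
    refine Integrable.mono' (integrable_const 1) hFmeas.aestronglyMeasurable ?_
    apply Filter.Eventually.of_forall
    intro z
    rw [Function.uncurry]
    simp only [norm_mul, RCLike.norm_conj]
    rw [hfnorm, hfnorm, mul_one]
  rw [MeasureTheory.integral_integral_swap hFint]
  -- Step 4 : key identity
  have key : ∀ u s : ℝ, 0 ≤ u → u ≤ s →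
      ∫ x, (starRingEnd ℂ) (f (u, x)) * f (s, x) ∂μ = Complex.exp (c * ((s:ℂ) - u)) := by
    intro u s hu hus
    have hptw : ∀ᵐ x ∂μ, (starRingEnd ℂ) (f (u, x)) * f (s, x)
        = Complex.exp (Complex.I * (omg:ℂ) * ((s - u : ℝ) : ℂ)) *
          Complex.exp (Complex.I * (γ:ℂ) * ((W s x - W u x : ℝ) : ℂ)) := by
      filter_upwards [hW'W] with x hx
      rw [hfdef]
      simp only
      rw [← Complex.exp_conj, ← Complex.exp_add, ← Complex.exp_add]
      apply congrArg
      simp only [map_mul, map_add, Complex.conj_I, Complex.conj_ofReal, hx u, hx s]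
      push_cast
      ring
    rw [integral_congr_ae hptw, MeasureTheory.integral_const_mul]
    have hmapint : ∫ x, Complex.exp (Complex.I * (γ:ℂ) * ((W s x - W u x : ℝ) : ℂ)) ∂μ
        = ∫ y : ℝ, Complex.exp (Complex.I * (γ:ℂ) * (y : ℂ)) ∂(μ.map (fun x => W s x - W u x)) := by
      rw [integral_map (φ := fun x => W s x - W u x) ((hW.meas s).sub (hW.meas u)).aemeasurable]
      exact (Continuous.aestronglyMeasurable (by fun_prop))
    rw [hmapint, hW.incr_law u s hu hus, gaussian_cexp]
    rw [← Complex.exp_add]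
    apply congrArg
    rw [hc]
    have hv : ((Real.toNNReal (s - u) : ℝ≥0) : ℝ) = s - u :=
      Real.coe_toNNReal _ (sub_nonneg.mpr hus)
    rw [hv]
    push_cast
    ring
  have step4 : ∫ p, (∫ x, (starRingEnd ℂ) (f (p.1, x)) * f (p.2, x) ∂μ) ∂(π0.prod π0)
      = ∫ p : ℝ × ℝ, (if p.1 ≤ p.2 then Complex.exp (c * (p.2 - p.1))
          else Complex.exp ((starRingEnd ℂ c) * (p.1 - p.2))) ∂(π0.prod π0) := by
    apply integral_congr_ae
    rw [hπ0, Measure.prod_restrict]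
    filter_upwards [ae_restrict_mem (measurableSet_Ioc.prod measurableSet_Ioc)] with p hp
    obtain ⟨⟨h11, _⟩, h21, _⟩ := hp
    by_cases hus : p.1 ≤ p.2
    · rw [if_pos hus, key p.1 p.2 h11.le hus]
    · rw [if_neg hus]
      push_neg at hus
      have : ∫ x, (starRingEnd ℂ) (f (p.1, x)) * f (p.2, x) ∂μ
          = (starRingEnd ℂ) (∫ x, (starRingEnd ℂ) (f (p.2, x)) * f (p.1, x) ∂μ) := by
        rw [← integral_conj]
        apply integral_congr_ae
        apply Filter.Eventually.of_forall
        intro x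
        simp only [map_mul, RingHomCompTriple.comp_apply, RingHom.id_apply,
          Complex.conj_conj]
        ring
      rw [this, key p.2 p.1 h21.le hus.le, ← Complex.exp_conj]
      apply congrArg
      rw [map_mul]
      rw [show ((starRingEnd ℂ) ((p.1:ℂ) - (p.2:ℂ))) = (p.1:ℂ) - (p.2:ℂ) by
        rw [map_sub, Complex.conj_ofReal, Complex.conj_ofReal]]
  rw [step4, hπ0, det_integral c hc0 t ht]
end

section
/- Let φ_t = ωt + γW_t with W standard Brownian motion and c = iω − γ²/2 ≠ 0. For fixed t ≥ 0, the random variables e^{−iφ_t} Z_t and conj(Z_t) have the same distribution, where Z_t = ∫_0^t e^{iφ_s} ds. -/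
open MeasureTheory ProbabilityTheory
open Filter Finset
open scoped ENNReal NNReal BoundedContinuousFunction

/-- Riemann sums with arbitrary tags converge to the integral, for continuous integrands. -/
lemma riemann_tendsto {t : ℝ} (ht : 0 < t) (ψ : ℝ → ℂ) (hψ : Continuous ψ)
    (ξ : ℕ → ℕ → ℝ)
    (hξ : ∀ n k : ℕ, k < n → ξ n k ∈ Set.Icc ((k : ℝ) * t / n) (((k : ℝ) + 1) * t / n)) :
    Tendsto (fun n : ℕ => ((t / n : ℝ) : ℂ) * ∑ k ∈ range n, ψ (ξ n k)) atTop
      (nhds (∫ s in (0:ℝ)..t, ψ s)) := by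
  have hgrid : ∀ n k : ℕ, k < n →
      Set.Icc ((k : ℝ) * t / n) (((k : ℝ) + 1) * t / n) ⊆ Set.Icc 0 t := by
    intro n k hk
    have hn : (0:ℝ) < n := by exact_mod_cast lt_of_le_of_lt (Nat.zero_le k) hk
    apply Set.Icc_subset_Icc
    · positivity
    · rw [div_le_iff₀ hn]
      have : (k:ℝ) + 1 ≤ n := by exact_mod_cast hk
      nlinarith
  rw [Metric.tendsto_atTop]
  intro ε hε
  obtain ⟨δ, hδ, hmod⟩ := (Metric.uniformContinuousOn_iff.mp
    ((isCompact_Icc : IsCompact (Set.Icc (0:ℝ) t)).uniformContinuousOn_of_continuous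
      (hψ.continuousOn))) (ε / (2 * t)) (by positivity)
  obtain ⟨N, hN⟩ := exists_nat_gt (t / δ)
  refine ⟨max N 1, fun n hn => ?_⟩
  have hn1 : 1 ≤ n := le_trans (le_max_right _ _) hn
  have hnN : (N:ℝ) ≤ n := by exact_mod_cast le_trans (le_max_left _ _) hn
  have hnpos : (0:ℝ) < n := by exact_mod_cast hn1
  have hmesh : t / n < δ := by
    have htd : t / δ < n := lt_of_lt_of_le hN hnN
    rw [div_lt_iff₀ hnpos]
    rw [div_lt_iff₀ hδ] at htd
    linarith
  have hsplit : (∫ s in (0:ℝ)..t, ψ s)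
      = ∑ k ∈ range n, (∫ s in ((k:ℝ) * t / n)..(((k:ℝ)+1) * t / n), ψ s) := by
    have h := intervalIntegral.sum_integral_adjacent_intervals
      (a := fun k : ℕ => (k:ℝ) * t / n) (n := n) (f := ψ)
      (fun k _ => hψ.intervalIntegrable (μ := volume) _ _)
    have h0 : ((0:ℕ):ℝ) * t / n = 0 := by norm_num
    have hT : ((n:ℕ):ℝ) * t / n = t := by field_simp
    rw [h0, hT] at h
    rw [← h]
    refine Finset.sum_congr rfl fun k _ => ?_
    push_cast
    rfl
  rw [dist_eq_norm, hsplit, Finset.mul_sum, ← Finset.sum_sub_distrib]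
  have hterm : ∀ k ∈ range n,
      ‖((t / n : ℝ) : ℂ) * ψ (ξ n k) - ∫ s in ((k:ℝ) * t / n)..(((k:ℝ)+1) * t / n), ψ s‖
        ≤ (t / n) * (ε / (2 * t)) := by
    intro k hk
    have hk' : k < n := Finset.mem_range.mp hk
    have hle : (k:ℝ) * t / n ≤ ((k:ℝ)+1) * t / n := by
      rw [div_le_div_iff₀ hnpos hnpos]; nlinarith
    have hconst : ((t / n : ℝ) : ℂ) * ψ (ξ n k)
        = ∫ _ in ((k:ℝ) * t / n)..(((k:ℝ)+1) * t / n), ψ (ξ n k) := by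
      rw [intervalIntegral.integral_const]
      have : ((k:ℝ)+1) * t / n - (k:ℝ) * t / n = t / n := by ring
      rw [this]
      simp [Complex.real_smul]
    rw [hconst, ← intervalIntegral.integral_sub (by simp) (hψ.intervalIntegrable _ _)]
    have hbound : ‖∫ s in ((k:ℝ) * t / n)..(((k:ℝ)+1) * t / n), (ψ (ξ n k) - ψ s)‖
        ≤ (ε / (2 * t)) * |(((k:ℝ)+1) * t / n) - ((k:ℝ) * t / n)| := by
      apply intervalIntegral.norm_integral_le_of_norm_le_const
      intro s hs
      rw [Set.uIoc_of_le hle] at hs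
      have hsIcc : s ∈ Set.Icc 0 t := hgrid n k hk' (Set.mem_Icc.mpr ⟨le_of_lt hs.1, hs.2⟩)
      have hξIcc : ξ n k ∈ Set.Icc 0 t := hgrid n k hk' (hξ n k hk')
      have hdist : dist (ξ n k) s < δ := by
        have h1 := (hξ n k hk').1
        have h2 := (hξ n k hk').2
        have h3 := hs.1
        have h4 := hs.2
        rw [Real.dist_eq]
        have : ((k:ℝ)+1) * t / n - (k:ℝ) * t / n = t / n := by ring
        have habs : |ξ n k - s| ≤ t / n := by
          rw [abs_le]; constructor <;> nlinarith
        linarith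
      have := hmod _ hξIcc _ hsIcc hdist
      rw [dist_eq_norm] at this
      exact le_of_lt this
    refine hbound.trans (le_of_eq ?_)
    have h1 : (((k:ℝ)+1) * t / n) - ((k:ℝ) * t / n) = t / n := by ring
    rw [h1, abs_of_pos (by positivity)]
    ring
  calc ‖∑ k ∈ range n, (((t / n : ℝ) : ℂ) * ψ (ξ n k)
          - ∫ s in ((k:ℝ) * t / n)..(((k:ℝ)+1) * t / n), ψ s)‖
      ≤ ∑ k ∈ range n, ((t / n) * (ε / (2 * t))) :=
        norm_sum_le_of_le _ hterm
    _ = n * ((t / n) * (ε / (2 * t))) := by rw [Finset.sum_const, card_range]; simp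
    _ = ε / 2 := by field_simp
    _ < ε := by linarith


lemma law_eq {Ω : Type*} [MeasurableSpace Ω] (μ : Measure Ω) [IsProbabilityMeasure μ]
    (W : ℝ → Ω → ℝ) (hW : IsStdBrownian μ W) (omg γ t : ℝ) (ht : 0 < t)
    (φ : ℝ → Ω → ℝ) (hφ : ∀ s x, φ s x = omg * s + γ * W s x)
    (n : ℕ) (hn : 0 < n) :
    μ.map (fun x => Complex.exp (-Complex.I * (φ t x : ℂ)) *
        (((t / n : ℝ) : ℂ) * ∑ k ∈ range n,
          Complex.exp (Complex.I * (φ ((k : ℝ) * t / n) x : ℂ)))) =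
      μ.map (fun x => (starRingEnd ℂ) (((t / n : ℝ) : ℂ) * ∑ k ∈ range n,
          Complex.exp (Complex.I * (φ (((k : ℕ) + 1 : ℕ) * t / n) x : ℂ)))) := by
  have hnR : (0:ℝ) < n := by exact_mod_cast hn
  set τ : ℕ → ℝ := fun k => (k : ℝ) * t / n with hτ
  have hτ0 : τ 0 = 0 := by simp [hτ]
  have hτn : τ n = t := by simp only [hτ]; field_simp
  have hτmono : Monotone τ := by
    intro a b hab
    have hab' : (a:ℝ) ≤ b := by exact_mod_cast hab
    simp only [hτ]
    gcongr
  have hτnonneg : ∀ k, 0 ≤ τ k := fun k => by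
    have : (0:ℝ) ≤ (k:ℝ) := by positivity
    simp only [hτ]; positivity
  set V : Ω → (Fin n → ℝ) := fun x i => W (τ (i.1 + 1)) x - W (τ i.1) x with hVdef
  set V' : Ω → (Fin n → ℝ) := fun x i => V x i.rev with hV'def
  have hVm : Measurable V :=
    measurable_pi_lambda _ fun i => (hW.meas _).sub (hW.meas _)
  have hV'm : Measurable V' :=
    measurable_pi_lambda _ fun i => ((hW.meas _).sub (hW.meas _))
  have hiid : iIndepFun (fun (i : Fin n) x => V x i) μ := by
    have h := hW.indep_incr n (fun j : Fin (n+1) => τ j.1)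
      (fun a b hab => hτmono (by exact_mod_cast hab))
    simpa only [hVdef, Fin.val_succ, Fin.coe_castSucc] using h
  have hmarg : ∀ i : Fin n, μ.map (fun x => V x i) = gaussianReal 0 ((t/n).toNNReal) := by
    intro i
    have h := hW.incr_law (τ i.1) (τ (i.1 + 1)) (hτnonneg _) (hτmono (Nat.le_succ _))
    have harg : τ (i.1 + 1) - τ i.1 = t / n := by
      simp only [hτ]; push_cast; ring
    rw [harg] at h
    exact h
  have hlawV : Measure.pi (fun _ : Fin n => gaussianReal 0 ((t/n).toNNReal)) = μ.map V := by
    apply Measure.pi_eq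
    intro A hA
    rw [Measure.map_apply hVm (MeasurableSet.univ_pi hA)]
    have hpre : V ⁻¹' (Set.pi Set.univ A) = ⋂ i, (fun x => V x i) ⁻¹' A i := by
      ext x; simp [Set.mem_pi]
    have hbi : (⋂ i, (fun x => V x i) ⁻¹' A i)
        = ⋂ i ∈ (Finset.univ : Finset (Fin n)), (fun x => V x i) ⁻¹' A i := by
      simp
    rw [hpre, hbi]
    rw [(iIndepFun_iff_measure_inter_preimage_eq_mul.mp hiid) Finset.univ (fun i _ => hA i)]
    refine Finset.prod_congr rfl fun i _ => ?_
    rw [← Measure.map_apply (hVm.eval) (hA i), hmarg i]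
  have hlawV' : Measure.pi (fun _ : Fin n => gaussianReal 0 ((t/n).toNNReal)) = μ.map V' := by
    apply Measure.pi_eq
    intro A hA
    rw [Measure.map_apply hV'm (MeasurableSet.univ_pi hA)]
    have hpre : V' ⁻¹' (Set.pi Set.univ A) = ⋂ i, (fun x => V x i.rev) ⁻¹' A i := by
      ext x; simp [Set.mem_pi, hV'def]
    have hre : (⋂ i, (fun x => V x i.rev) ⁻¹' A i)
        = ⋂ j, (fun x => V x j) ⁻¹' A j.rev := by
      ext x
      simp only [Set.mem_iInter, Set.mem_preimage]
      exact ⟨fun h j => by simpa [Fin.rev_rev] using h j.rev,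
        fun h i => by simpa [Fin.rev_rev] using h i.rev⟩
    have hbi : (⋂ j, (fun x => V x j) ⁻¹' A j.rev)
        = ⋂ j ∈ (Finset.univ : Finset (Fin n)), (fun x => V x j) ⁻¹' A j.rev := by
      simp
    rw [hpre, hre, hbi]
    rw [(iIndepFun_iff_measure_inter_preimage_eq_mul.mp hiid) Finset.univ
      (fun i _ => hA i.rev)]
    rw [← Equiv.prod_comp Fin.revPerm (fun i : Fin n => gaussianReal 0 ((t/n).toNNReal) (A i))]
    refine Finset.prod_congr rfl fun i _ => ?_
    rw [← Measure.map_apply (hVm.eval) (hA i.rev), hmarg i]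
    rfl
  set bar : (Fin n → ℝ) → ℕ → ℝ := fun y j => if h : j < n then y ⟨j, h⟩ else 0 with hbar
  set G : (Fin n → ℝ) → ℂ := fun y => ((t / n : ℝ) : ℂ) * ∑ k ∈ range n,
      Complex.exp (-Complex.I *
        ((omg * τ (k + 1) + γ * ∑ j ∈ range (k + 1), bar y j : ℝ) : ℂ)) with hG
  have hGm : Measurable G := by
    apply Measurable.const_mul
    apply Finset.measurable_sum
    intro k _
    apply Complex.measurable_exp.comp
    apply Measurable.const_mul
    apply Complex.measurable_ofReal.comp
    apply Measurable.const_add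
    apply Measurable.const_mul
    apply Finset.measurable_sum
    intro j _
    simp only [hbar]
    split_ifs with h
    · exact measurable_pi_apply _
    · exact measurable_const
  have hgeq : (fun x => (starRingEnd ℂ) (((t / n : ℝ) : ℂ) * ∑ k ∈ range n,
        Complex.exp (Complex.I * (φ (((k : ℕ) + 1 : ℕ) * t / n) x : ℂ))))
      =ᵐ[μ] G ∘ V := by
    filter_upwards [hW.start] with x hx
    have hsum : ∀ k ∈ range n, ∑ j ∈ range (k + 1), bar (V x) j = W (τ (k+1)) x := by
      intro k hk
      have hk' : k < n := mem_range.mp hk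
      have hterm : ∀ j ∈ range (k+1), bar (V x) j = W (τ (j+1)) x - W (τ j) x := by
        intro j hj
        have hjn : j < n := lt_of_lt_of_le (mem_range.mp hj) hk'
        simp only [hbar, hVdef, dif_pos hjn]
      rw [Finset.sum_congr rfl hterm, Finset.sum_range_sub (fun m => W (τ m) x)]
      rw [hτ0, hx, sub_zero]
    simp only [Function.comp_apply, hG, map_mul, map_sum, Complex.conj_ofReal,
      ← Complex.exp_conj, map_mul, Complex.conj_I, neg_mul]
    congr 1
    refine Finset.sum_congr rfl fun k hk => ?_
    rw [hsum k hk]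
    have harg : φ ((((k : ℕ) + 1 : ℕ)) * t / n) x = omg * τ (k+1) + γ * W (τ (k+1)) x := by
      rw [hφ]
    rw [harg]
  have hfeq : (fun x => Complex.exp (-Complex.I * (φ t x : ℂ)) *
        (((t / n : ℝ) : ℂ) * ∑ k ∈ range n,
          Complex.exp (Complex.I * (φ ((k : ℝ) * t / n) x : ℂ))))
      = G ∘ V' := by
    funext x
    have hsum : ∀ k ∈ range n, ∑ j ∈ range (k + 1), bar (V' x) j
        = W (τ n) x - W (τ (n - 1 - k)) x := by
      intro k hk
      have hk' : k < n := mem_range.mp hk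
      have hterm : ∀ j ∈ range (k+1), bar (V' x) j
          = (fun m => -W (τ (n - m)) x) (j+1) - (fun m => -W (τ (n - m)) x) j := by
        intro j hj
        have hjk : j < k + 1 := mem_range.mp hj
        have hjn : j < n := lt_of_lt_of_le hjk hk'
        have h1 : (Fin.rev ⟨j, hjn⟩ : Fin n).1 = n - 1 - j := by
          simp [Fin.rev]; omega
        simp only [hbar, hV'def, hVdef, dif_pos hjn, h1]
        have h2 : n - 1 - j + 1 = n - j := by omega
        have h3 : n - (j + 1) = n - 1 - j := by omega
        rw [h2, h3]
        ring
      rw [Finset.sum_congr rfl hterm, Finset.sum_range_sub (fun m => -W (τ (n - m)) x)]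
      have h4 : n - (k + 1) = n - 1 - k := by omega
      simp only [h4, Nat.sub_zero]
      ring
    have hrefl := Finset.sum_range_reflect
      (fun k => Complex.exp (Complex.I * (φ ((k : ℝ) * t / n) x : ℂ))) n
    simp only [Function.comp_apply, hG]
    rw [← hrefl]
    rw [Finset.mul_sum, Finset.mul_sum, Finset.mul_sum]
    refine Finset.sum_congr rfl fun k hk => ?_
    have hk' : k < n := mem_range.mp hk
    rw [hsum k hk]
    rw [mul_left_comm]
    congr 1
    rw [← Complex.exp_add]
    congr 1
    have hcast : ((n - 1 - k : ℕ) : ℝ) = (n : ℝ) - 1 - k := by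
      have h5 : n - 1 - k = n - (1 + k) := by omega
      rw [h5, Nat.cast_sub (by omega)]
      push_cast
      ring
    have hWt : W (τ n) x = W t x := by rw [hτn]
    have hreal : omg * τ (k + 1) + γ * (W (τ n) x - W (τ (n - 1 - k)) x)
        = φ t x - φ ((((n - 1 - k : ℕ)) : ℝ) * t / n) x := by
      rw [hWt, hφ, hφ]
      have hτ' : τ (n - 1 - k) = (((n - 1 - k : ℕ)) : ℝ) * t / n := by simp only [hτ]
      rw [hτ']
      simp only [hτ]
      rw [hcast]
      push_cast
      field_simp
      ring
    rw [hreal]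
    push_cast
    ring
  calc μ.map (fun x => Complex.exp (-Complex.I * (φ t x : ℂ)) *
        (((t / n : ℝ) : ℂ) * ∑ k ∈ range n,
          Complex.exp (Complex.I * (φ ((k : ℝ) * t / n) x : ℂ))))
      = μ.map (G ∘ V') := by rw [hfeq]
    _ = (μ.map V').map G := (Measure.map_map hGm hV'm).symm
    _ = (μ.map V).map G := by rw [← hlawV', ← hlawV]
    _ = μ.map (G ∘ V) := Measure.map_map hGm hVm
    _ = _ := (Measure.map_congr hgeq).symm


/-- For fixed `t ≥ 0`, the random variables `e^{−iφ_t} Z_t` and `conj(Z_t)` have the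
same distribution, where `φ_s = ωs + γ W_s` and `Z_t = ∫_0^t e^{iφ_s} ds`. -/
theorem time_reversal_Z
    {Ω : Type*} [MeasurableSpace Ω] (μ : Measure Ω) [IsProbabilityMeasure μ]
    (W : ℝ → Ω → ℝ) (hW : IsStdBrownian μ W)
    (omg γ : ℝ) (c : ℂ) (hc : c = Complex.I * omg - (γ : ℂ) ^ 2 / 2) (hc0 : c ≠ 0)
    (t : ℝ) (ht : 0 ≤ t)
    (φ : ℝ → Ω → ℝ) (hφ : ∀ s x, φ s x = omg * s + γ * W s x)
    (Z : ℝ → Ω → ℂ)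
    (hZ : ∀ u x, Z u x = ∫ s in (0:ℝ)..u, Complex.exp (Complex.I * (φ s x : ℂ))) :
    μ.map (fun x => Complex.exp (-Complex.I * (φ t x : ℂ)) * Z t x) =
      μ.map (fun x => (starRingEnd ℂ) (Z t x)) := by
  rcases eq_or_lt_of_le ht with h0 | htpos
  · have hZ0 : ∀ x, Z t x = 0 := fun x => by
      rw [hZ, ← h0, intervalIntegral.integral_same]
    have h1 : (fun x => Complex.exp (-Complex.I * (φ t x : ℂ)) * Z t x)
        = fun _ => (0:ℂ) := funext fun x => by rw [hZ0 x, mul_zero]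
    have h2 : (fun x => (starRingEnd ℂ) (Z t x)) = fun _ => (0:ℂ) :=
      funext fun x => by rw [hZ0 x, map_zero]
    rw [h1, h2]
  · have hφm : ∀ s, Measurable (φ s) := by
      intro s
      have h : φ s = fun x => omg * s + γ * W s x := funext fun x => hφ s x
      rw [h]
      exact measurable_const.add ((hW.meas s).const_mul γ)
    set fn : ℕ → Ω → ℂ := fun n x => Complex.exp (-Complex.I * (φ t x : ℂ)) *
        (((t / n : ℝ) : ℂ) * ∑ k ∈ range n,
          Complex.exp (Complex.I * (φ ((k : ℝ) * t / n) x : ℂ))) with hfn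
    set gn : ℕ → Ω → ℂ := fun n x => (starRingEnd ℂ) (((t / n : ℝ) : ℂ) * ∑ k ∈ range n,
        Complex.exp (Complex.I * (φ (((k : ℕ) + 1 : ℕ) * t / n) x : ℂ))) with hgn
    have hexpm : ∀ s, Measurable (fun x => Complex.exp (Complex.I * (φ s x : ℂ))) := fun s =>
      Complex.measurable_exp.comp (measurable_const.mul
        (Complex.measurable_ofReal.comp (hφm s)))
    have hfnm : ∀ n, Measurable (fn n) := by
      intro n
      apply Measurable.mul
      · exact Complex.measurable_exp.comp (measurable_const.mul
          (Complex.measurable_ofReal.comp (hφm t)))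
      · exact measurable_const.mul (Finset.measurable_sum _ fun k _ => hexpm _)
    have hgnm : ∀ n, Measurable (gn n) := fun n =>
      Complex.continuous_conj.measurable.comp
        (measurable_const.mul (Finset.measurable_sum _ fun k _ => hexpm _))
    have hmemL : ∀ n k : ℕ, k < n →
        (k : ℝ) * t / n ∈ Set.Icc ((k : ℝ) * t / n) (((k : ℝ) + 1) * t / n) := by
      intro n k hk
      have hnR : (0:ℝ) < n := by exact_mod_cast lt_of_le_of_lt (Nat.zero_le k) hk
      refine ⟨le_rfl, ?_⟩
      rw [div_le_div_iff₀ hnR hnR]; nlinarith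
    have hmemR : ∀ n k : ℕ, k < n →
        (((k : ℕ) + 1 : ℕ) : ℝ) * t / n ∈ Set.Icc ((k : ℝ) * t / n) (((k : ℝ) + 1) * t / n) := by
      intro n k hk
      have hnR : (0:ℝ) < n := by exact_mod_cast lt_of_le_of_lt (Nat.zero_le k) hk
      constructor
      · push_cast
        rw [div_le_div_iff₀ hnR hnR]; nlinarith
      · push_cast
        exact le_rfl
    have hψcont : ∀ x : Ω, (Continuous fun u => W u x) →
        Continuous fun s => Complex.exp (Complex.I * (φ s x : ℂ)) := by
      intro x hx
      have hφc : Continuous fun s => φ s x := by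
        have h : (fun s => φ s x) = fun s => omg * s + γ * W s x := funext fun s => hφ s x
        rw [h]
        exact (continuous_const.mul continuous_id).add (continuous_const.mul hx)
      exact Complex.continuous_exp.comp (continuous_const.mul
        (Complex.continuous_ofReal.comp hφc))
    have hconv_f : ∀ᵐ x ∂μ, Tendsto (fun n => fn n x) atTop
        (nhds (Complex.exp (-Complex.I * (φ t x : ℂ)) * Z t x)) := by
      filter_upwards [hW.cont] with x hx
      have hR := riemann_tendsto htpos _ (hψcont x hx)
        (fun n k => (k : ℝ) * t / n) (fun n k hk => hmemL n k hk)
      rw [hZ]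
      simp only [hfn]
      exact hR.const_mul _
    have hconv_g : ∀ᵐ x ∂μ, Tendsto (fun n => gn n x) atTop
        (nhds ((starRingEnd ℂ) (Z t x))) := by
      filter_upwards [hW.cont] with x hx
      have hR := riemann_tendsto htpos _ (hψcont x hx)
        (fun n k => (((k : ℕ) + 1 : ℕ) : ℝ) * t / n) (fun n k hk => hmemR n k hk)
      rw [hZ]
      simp only [hgn, starRingEnd_apply]
      exact hR.star
    have haf : AEMeasurable (fun x => Complex.exp (-Complex.I * (φ t x : ℂ)) * Z t x) μ :=
      aemeasurable_of_tendsto_metrizable_ae' (fun n => (hfnm n).aemeasurable) hconv_f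
    have hag : AEMeasurable (fun x => (starRingEnd ℂ) (Z t x)) μ :=
      aemeasurable_of_tendsto_metrizable_ae' (fun n => (hgnm n).aemeasurable) hconv_g
    have hP1 : IsProbabilityMeasure
        (μ.map (fun x => Complex.exp (-Complex.I * (φ t x : ℂ)) * Z t x)) :=
      Measure.isProbabilityMeasure_map haf
    have hP2 : IsProbabilityMeasure (μ.map (fun x => (starRingEnd ℂ) (Z t x))) :=
      Measure.isProbabilityMeasure_map hag
    apply ext_of_forall_lintegral_eq_of_IsFiniteMeasure
    intro F
    have hFm : Measurable fun z : ℂ => (F z : ℝ≥0∞) :=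
      measurable_coe_nnreal_ennreal.comp F.continuous.measurable
    rw [lintegral_map' hFm.aemeasurable haf, lintegral_map' hFm.aemeasurable hag]
    obtain ⟨C, hC⟩ := F.bounded
    set B : ℝ≥0∞ := (F 0 : ℝ≥0∞) + ENNReal.ofReal C with hB
    have hFB : ∀ z : ℂ, (F z : ℝ≥0∞) ≤ B := by
      intro z
      have h := hC z 0
      rw [NNReal.dist_eq] at h
      have hC0 : (0:ℝ) ≤ C := le_trans dist_nonneg (hC 0 0)
      have h2 : (F z : ℝ) ≤ (F 0 : ℝ) + C := by
        have h3 := (abs_le.mp h).2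
        linarith
      calc (F z : ℝ≥0∞) = ENNReal.ofReal (F z : ℝ) := by
            rw [ENNReal.ofReal_coe_nnreal]
        _ ≤ ENNReal.ofReal ((F 0 : ℝ) + C) := ENNReal.ofReal_le_ofReal h2
        _ ≤ B := by
            rw [ENNReal.ofReal_add (by positivity) hC0, hB, ENNReal.ofReal_coe_nnreal]
    have hbnd : ∫⁻ _, B ∂μ ≠ ⊤ := by
      rw [lintegral_const, measure_univ, mul_one, hB]
      exact ENNReal.add_ne_top.mpr ⟨ENNReal.coe_ne_top, ENNReal.ofReal_ne_top⟩
    have L1 : Tendsto (fun n => ∫⁻ x, (F (fn n x) : ℝ≥0∞) ∂μ) atTop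
        (nhds (∫⁻ x, (F (Complex.exp (-Complex.I * (φ t x : ℂ)) * Z t x) : ℝ≥0∞) ∂μ)) := by
      apply tendsto_lintegral_of_dominated_convergence (fun _ => B)
        (fun n => hFm.comp (hfnm n)) (fun n => Eventually.of_forall fun x => hFB _) hbnd
      filter_upwards [hconv_f] with x hx
      exact (ENNReal.continuous_coe.tendsto _).comp ((F.continuous.tendsto _).comp hx)
    have L2 : Tendsto (fun n => ∫⁻ x, (F (gn n x) : ℝ≥0∞) ∂μ) atTop
        (nhds (∫⁻ x, (F ((starRingEnd ℂ) (Z t x)) : ℝ≥0∞) ∂μ)) := by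
      apply tendsto_lintegral_of_dominated_convergence (fun _ => B)
        (fun n => hFm.comp (hgnm n)) (fun n => Eventually.of_forall fun x => hFB _) hbnd
      filter_upwards [hconv_g] with x hx
      exact (ENNReal.continuous_coe.tendsto _).comp ((F.continuous.tendsto _).comp hx)
    have hEq : ∀ᶠ n in atTop, (∫⁻ x, (F (fn n x) : ℝ≥0∞) ∂μ)
        = ∫⁻ x, (F (gn n x) : ℝ≥0∞) ∂μ := by
      rw [eventually_atTop]
      refine ⟨1, fun n hn => ?_⟩
      have hl : μ.map (fn n) = μ.map (gn n) := by
        have hfneq : fn n = fun x => Complex.exp (-Complex.I * (φ t x : ℂ)) *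
            (((t / n : ℝ) : ℂ) * ∑ k ∈ range n,
              Complex.exp (Complex.I * (φ ((k : ℝ) * t / n) x : ℂ))) := by
          simp only [hfn]
        have hgneq : gn n = fun x => (starRingEnd ℂ) (((t / n : ℝ) : ℂ) * ∑ k ∈ range n,
            Complex.exp (Complex.I * (φ (((k : ℕ) + 1 : ℕ) * t / n) x : ℂ))) := by
          simp only [hgn]
        rw [hfneq, hgneq]
        exact law_eq μ W hW omg γ t htpos φ hφ n hn
      calc (∫⁻ x, (F (fn n x) : ℝ≥0∞) ∂μ)
          = ∫⁻ z, (F z : ℝ≥0∞) ∂(μ.map (fn n)) := (lintegral_map hFm (hfnm n)).symm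
        _ = ∫⁻ z, (F z : ℝ≥0∞) ∂(μ.map (gn n)) := by rw [hl]
        _ = ∫⁻ x, (F (gn n x) : ℝ≥0∞) ∂μ := lintegral_map hFm (hgnm n)
    exact tendsto_nhds_unique (L1.congr' hEq) L2
end

section
/- Let ω > 0, γ > 0, c = iω − γ²/2, and define S_t = c⁻² + |c|⁻² − (conj(c)⁻² + |c|⁻²) e^{−γ²t} for t ≥ 0. Then S_t = ((c + conj(c))/|c|⁴)(conj(c) − c e^{−γ²t}), |S_t| ≤ 2γ²/ω³, and S_t + conj(S_t) = ((c+conj(c))²/|c|⁴)(1 − e^{−γ²t}) with |S_t + conj(S_t)| ≤ 2γ⁴/ω⁴. -/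
/-- Let `ω > 0`, `γ > 0`, `c = iω − γ²/2`, and
`S_t = c⁻² + |c|⁻² − (conj(c)⁻² + |c|⁻²) e^{−γ²t}` for `t ≥ 0`. Then
`S_t = ((c + conj c)/|c|⁴)(conj c − c e^{−γ²t})`, `|S_t| ≤ 2γ²/ω³`,
`S_t + conj S_t = ((c + conj c)²/|c|⁴)(1 − e^{−γ²t})` and `|S_t + conj S_t| ≤ 2γ⁴/ω⁴`. -/
theorem secular_term_bounds (ω γ t : ℝ) (hω : 0 < ω) (hγ : 0 < γ) (ht : 0 ≤ t)
    (c : ℂ) (hc : c = Complex.I * ω - (γ : ℂ) ^ 2 / 2)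
    (S : ℂ)
    (hS : S = (c ^ 2)⁻¹ + ((‖c‖ : ℂ) ^ 2)⁻¹
      - (((starRingEnd ℂ c) ^ 2)⁻¹ + ((‖c‖ : ℂ) ^ 2)⁻¹)
        * Complex.exp (-(γ : ℂ) ^ 2 * t)) :
    S = ((c + starRingEnd ℂ c) / (‖c‖ : ℂ) ^ 4)
        * (starRingEnd ℂ c - c * Complex.exp (-(γ : ℂ) ^ 2 * t))
    ∧ ‖S‖ ≤ 2 * γ ^ 2 / ω ^ 3
    ∧ S + starRingEnd ℂ S = ((c + starRingEnd ℂ c) ^ 2 / (‖c‖ : ℂ) ^ 4)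
        * (1 - Complex.exp (-(γ : ℂ) ^ 2 * t))
    ∧ ‖S + starRingEnd ℂ S‖ ≤ 2 * γ ^ 4 / ω ^ 4 := by
  have him : c.im = ω := by
    rw [hc]
    simp [← Complex.ofReal_pow]
  have hne : c ≠ 0 := by
    intro h
    rw [h] at him
    simp at him
    exact absurd him.symm hω.ne'
  have hcne : starRingEnd ℂ c ≠ 0 := by simpa using hne
  have hc0 : 0 < ‖c‖ := norm_pos_iff.mpr hne
  have habs2 : ((‖c‖ : ℂ)) ^ 2 = c * starRingEnd ℂ c := by
    rw [Complex.mul_conj, Complex.normSq_eq_norm_sq]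
    push_cast
    ring
  have hcc : c + starRingEnd ℂ c = -(γ : ℂ) ^ 2 := by
    rw [hc]
    simp only [map_sub, map_mul, map_div₀, Complex.conj_I, map_pow, Complex.conj_ofReal,
      map_ofNat]
    ring
  have hE : Complex.exp (-(γ : ℂ) ^ 2 * t) = ((Real.exp (-γ ^ 2 * t) : ℝ) : ℂ) := by
    rw [Complex.ofReal_exp]
    push_cast
    ring_nf
  have hEle : Real.exp (-γ ^ 2 * t) ≤ 1 := by
    apply Real.exp_le_one_iff.mpr
    nlinarith
  have hEpos : 0 < Real.exp (-γ ^ 2 * t) := Real.exp_pos _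
  have hωc : ω ≤ ‖c‖ := by
    calc ω = |c.im| := by rw [him, abs_of_pos hω]
      _ ≤ ‖c‖ := Complex.abs_im_le_norm c
  -- part 1
  have h1 : S = ((c + starRingEnd ℂ c) / (‖c‖ : ℂ) ^ 4)
      * (starRingEnd ℂ c - c * Complex.exp (-(γ : ℂ) ^ 2 * t)) := by
    have h4 : ((‖c‖ : ℂ)) ^ 4 = (c * starRingEnd ℂ c) ^ 2 := by
      rw [← habs2]; ring
    rw [hS, habs2, h4]
    field_simp
    ring
  have habs4 : ‖((‖c‖ : ℂ) ^ 4)‖ = ‖c‖ ^ 4 := by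
    rw [norm_pow, Complex.norm_real, Real.norm_eq_abs, abs_of_pos hc0]
  have hden : ‖(-(γ : ℂ) ^ 2)‖ = γ ^ 2 := by
    rw [norm_neg, norm_pow, Complex.norm_real, Real.norm_eq_abs, abs_of_pos hγ]
  -- part 2
  have h2 : ‖S‖ ≤ 2 * γ ^ 2 / ω ^ 3 := by
    rw [h1, norm_mul, norm_div, hcc, hden, habs4]
    have hnum : ‖starRingEnd ℂ c - c * Complex.exp (-(γ : ℂ) ^ 2 * t)‖
        ≤ 2 * ‖c‖ := by
      calc ‖starRingEnd ℂ c - c * Complex.exp (-(γ : ℂ) ^ 2 * t)‖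
          ≤ ‖starRingEnd ℂ c‖ + ‖c * Complex.exp (-(γ : ℂ) ^ 2 * t)‖ :=
            norm_sub_le _ _
        _ = ‖c‖ + ‖c‖ * Real.exp (-γ ^ 2 * t) := by
            rw [norm_mul, Complex.norm_conj, hE, Complex.norm_real, Real.norm_eq_abs, abs_of_pos hEpos]
        _ ≤ 2 * ‖c‖ := by nlinarith
    calc γ ^ 2 / ‖c‖ ^ 4
          * ‖starRingEnd ℂ c - c * Complex.exp (-(γ : ℂ) ^ 2 * t)‖
        ≤ γ ^ 2 / ‖c‖ ^ 4 * (2 * ‖c‖) :=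
          mul_le_mul_of_nonneg_left hnum (by positivity)
      _ = 2 * γ ^ 2 / ‖c‖ ^ 3 := by field_simp
      _ ≤ 2 * γ ^ 2 / ω ^ 3 := by
          apply div_le_div_of_nonneg_left (by positivity) (by positivity)
          exact pow_le_pow_left₀ hω.le hωc 3
  -- part 3
  have h3 : S + starRingEnd ℂ S = ((c + starRingEnd ℂ c) ^ 2 / (‖c‖ : ℂ) ^ 4)
      * (1 - Complex.exp (-(γ : ℂ) ^ 2 * t)) := by
    have hconjE : starRingEnd ℂ (Complex.exp (-(γ : ℂ) ^ 2 * t))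
        = Complex.exp (-(γ : ℂ) ^ 2 * t) := by
      rw [hE, Complex.conj_ofReal]
    have hSc : starRingEnd ℂ S = ((starRingEnd ℂ c + c) / (‖c‖ : ℂ) ^ 4)
        * (c - starRingEnd ℂ c * Complex.exp (-(γ : ℂ) ^ 2 * t)) := by
      rw [h1]
      simp only [map_mul, map_div₀, map_add, map_sub, Complex.conj_conj, map_pow,
        Complex.conj_ofReal, hconjE]
    have h4' : ((‖c‖ : ℂ)) ^ 4 = (c * starRingEnd ℂ c) ^ 2 := by
      rw [← habs2]; ring
    rw [hSc, h1, h4']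
    have : c * starRingEnd ℂ c ≠ 0 := mul_ne_zero hne hcne
    field_simp
    ring
  -- part 4
  have h4 : ‖S + starRingEnd ℂ S‖ ≤ 2 * γ ^ 4 / ω ^ 4 := by
    rw [h3, norm_mul, norm_div, hcc, habs4, norm_pow, hden]
    have hnum : ‖1 - Complex.exp (-(γ : ℂ) ^ 2 * t)‖ ≤ 1 := by
      rw [hE]
      rw [show (1 : ℂ) - ((Real.exp (-γ ^ 2 * t) : ℝ) : ℂ)
        = ((1 - Real.exp (-γ ^ 2 * t) : ℝ) : ℂ) by push_cast; ring]
      rw [Complex.norm_real, Real.norm_eq_abs]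
      rw [abs_of_nonneg (by linarith)]
      linarith
    calc (γ ^ 2) ^ 2 / ‖c‖ ^ 4 * ‖1 - Complex.exp (-(γ : ℂ) ^ 2 * t)‖
        ≤ (γ ^ 2) ^ 2 / ‖c‖ ^ 4 * 1 :=
          mul_le_mul_of_nonneg_left hnum (by positivity)
      _ = γ ^ 4 / ‖c‖ ^ 4 := by ring
      _ ≤ γ ^ 4 / ω ^ 4 := by
          apply div_le_div_of_nonneg_left (by positivity) (by positivity)
          exact pow_le_pow_left₀ hω.le hωc 4
      _ ≤ 2 * γ ^ 4 / ω ^ 4 := by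
          apply div_le_div_of_nonneg_right (by nlinarith) (by positivity)
  exact ⟨h1, h2, h3, h4⟩
end
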